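/- Let L > 1, let a_n² = Γ(n+L)/(Γ(L)Γ(n+1)), and for 0 < r < 1 set S(r) = Σ_{n≥0} max(log(a_n² r^{2n}), 0). Then as r ↑ 1, S(r) = ((L−1)²/4 + o(1)) · (1/(1−r)) · (log(1/(1−r)))². -/

import Mathlib

open Real Filter Topology Finset

namespace HP


noncomputable def b (L : ℝ) (n : ℕ) : ℝ := ∏ k ∈ Finset.range n, (((k : ℝ) + L) / ((k : ℝ) + 1))

lemma b_pos {L : ℝ} (hL : 0 < L) (n : ℕ) : 0 < b L n :=
  Finset.prod_pos fun k _ => div_pos (by positivity) (by positivity)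

lemma gamma_eq {L : ℝ} (hL : 0 < L) (n : ℕ) :
    Real.Gamma ((n : ℝ) + L) / (Real.Gamma L * Real.Gamma ((n : ℝ) + 1)) = b L n := by
  induction n with
  | zero => simp [b, Real.Gamma_one, div_self (ne_of_gt (Real.Gamma_pos_of_pos hL))]
  | succ n ih =>
      have hGL : 0 < Real.Gamma L := Real.Gamma_pos_of_pos hL
      have hGn : 0 < Real.Gamma ((n:ℝ) + 1) := Real.Gamma_pos_of_pos (by positivity)
      have h1 : Real.Gamma ((↑(n+1) : ℝ) + L) = ((n : ℝ) + L) * Real.Gamma ((n:ℝ) + L) := by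
        rw [show ((↑(n+1):ℝ) + L) = ((n:ℝ) + L) + 1 by push_cast; ring,
          Real.Gamma_add_one (by positivity)]
      have h2 : Real.Gamma ((↑(n+1) : ℝ) + 1) = ((n : ℝ) + 1) * Real.Gamma ((n:ℝ) + 1) := by
        rw [show ((↑(n+1):ℝ) + 1) = ((n:ℝ) + 1) + 1 by push_cast; ring,
          Real.Gamma_add_one (by positivity)]
      rw [h1, h2, b, Finset.prod_range_succ, ← b, ← ih]
      field_simp



noncomputable def H (n : ℕ) : ℝ := ∑ k ∈ Finset.range n, ((k : ℝ) + 1)⁻¹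

lemma harm_ge (n : ℕ) : Real.log ((n : ℝ) + 1) ≤ H n := by
  induction n with
  | zero => simp [H]
  | succ n ih =>
      have key : Real.log ((n:ℝ) + 2) - Real.log ((n:ℝ) + 1) ≤ ((n:ℝ) + 1)⁻¹ := by
        rw [← Real.log_div (by positivity) (by positivity)]
        have h := Real.log_le_sub_one_of_pos (show (0:ℝ) < ((n:ℝ)+2)/((n:ℝ)+1) by positivity)
        have e : ((n:ℝ)+2)/((n:ℝ)+1) - 1 = ((n:ℝ)+1)⁻¹ := by
          field_simp; norm_num
        linarith [e ▸ h]
      rw [H, Finset.sum_range_succ, ← H]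
      push_cast
      rw [show ((n:ℝ)+1+1) = ((n:ℝ)+2) by ring]
      linarith [ih]

lemma harm_le_aux (n : ℕ) : H (n+1) ≤ 1 + Real.log ((n : ℝ) + 1) := by
  induction n with
  | zero => simp [H]
  | succ n ih =>
      have key : ((n:ℝ) + 2)⁻¹ ≤ Real.log ((n:ℝ) + 2) - Real.log ((n:ℝ) + 1) := by
        rw [← Real.log_div (by positivity) (by positivity)]
        have h := Real.one_sub_inv_le_log_of_pos (show (0:ℝ) < ((n:ℝ)+2)/((n:ℝ)+1) by positivity)
        have e : 1 - (((n:ℝ)+2)/((n:ℝ)+1))⁻¹ = ((n:ℝ)+2)⁻¹ := by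
          rw [inv_div]; field_simp; norm_num
        linarith [e ▸ h]
      rw [H, Finset.sum_range_succ, ← H]
      push_cast
      rw [show ((n:ℝ)+1+1) = ((n:ℝ)+2) by ring]
      linarith [ih]

lemma sq_sum_le (n : ℕ) : ∑ k ∈ Finset.range n, (((k : ℝ) + 1)⁻¹)^2 ≤ 2 - 2*((n:ℝ)+1)⁻¹ := by
  induction n with
  | zero => norm_num
  | succ n ih =>
      rw [Finset.sum_range_succ]
      have h1 : (0:ℝ) < (n:ℝ) + 1 := by positivity
      have h2 : (0:ℝ) < (n:ℝ) + 2 := by positivity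
      have key : (((n:ℝ) + 1)⁻¹)^2 ≤ 2*((n:ℝ)+1)⁻¹ - 2*((n:ℝ)+2)⁻¹ := by
        rw [sq, ← mul_inv,
          show 2*((n:ℝ)+1)⁻¹ - 2*((n:ℝ)+2)⁻¹ = 2/(((n:ℝ)+1)*((n:ℝ)+2)) by field_simp; ring,
          inv_eq_one_div, div_le_div_iff₀ (by positivity) (by positivity)]
        nlinarith
      push_cast
      rw [show ((n:ℝ)+1+1) = ((n:ℝ)+2) by ring]
      linarith [ih]







variable {L : ℝ}

lemma log_b_eq (hL : 1 < L) (n : ℕ) :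
    Real.log (b L n) = ∑ k ∈ Finset.range n, Real.log (((k:ℝ)+L)/((k:ℝ)+1)) := by
  rw [b, Real.log_prod]
  intro k _
  have : (0:ℝ) < ((k:ℝ)+L)/((k:ℝ)+1) := by positivity
  exact this.ne'

lemma term_le (hL : 1 < L) (k : ℕ) :
    Real.log (((k:ℝ)+L)/((k:ℝ)+1)) ≤ (L-1) * ((k:ℝ)+1)⁻¹ := by
  have h := Real.log_le_sub_one_of_pos (show (0:ℝ) < ((k:ℝ)+L)/((k:ℝ)+1) by positivity)
  have e : ((k:ℝ)+L)/((k:ℝ)+1) - 1 = (L-1) * ((k:ℝ)+1)⁻¹ := by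
    field_simp; ring
  linarith [e ▸ h]

lemma term_ge (hL : 1 < L) (k : ℕ) :
    (L-1) * ((k:ℝ)+1)⁻¹ - (L-1)^2 * (((k:ℝ)+1)⁻¹)^2 ≤ Real.log (((k:ℝ)+L)/((k:ℝ)+1)) := by
  have hk : (0:ℝ) < (k:ℝ)+1 := by positivity
  have hkL : (0:ℝ) < (k:ℝ)+L := by nlinarith
  have h := Real.one_sub_inv_le_log_of_pos (show (0:ℝ) < ((k:ℝ)+L)/((k:ℝ)+1) by positivity)
  have e : 1 - (((k:ℝ)+L)/((k:ℝ)+1))⁻¹ = (L-1)/((k:ℝ)+L) := by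
    rw [inv_div]; field_simp; ring
  rw [e] at h
  refine le_trans ?_ h
  have key : (L-1) * ((k:ℝ)+1)⁻¹ - (L-1)^2 * (((k:ℝ)+1)⁻¹)^2
      = ((L-1)*((k:ℝ)+1) - (L-1)^2) / ((k:ℝ)+1)^2 := by
    field_simp
  rw [key, div_le_div_iff₀ (by positivity) hkL]
  have hm : (0:ℝ) < L - 1 := by linarith
  nlinarith [pow_pos hm 3]


lemma log_b_le (hL : 1 < L) (n : ℕ) :
    Real.log (b L (n+1)) ≤ (L-1) * (1 + Real.log ((n:ℝ)+1)) := by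
  rw [log_b_eq hL]
  calc ∑ k ∈ Finset.range (n+1), Real.log (((k:ℝ)+L)/((k:ℝ)+1))
      ≤ ∑ k ∈ Finset.range (n+1), (L-1) * ((k:ℝ)+1)⁻¹ :=
        Finset.sum_le_sum fun k _ => term_le hL k
    _ = (L-1) * H (n+1) := by rw [H, Finset.mul_sum]
    _ ≤ (L-1) * (1 + Real.log ((n:ℝ)+1)) := by
        have := harm_le_aux n
        nlinarith [this]

lemma log_b_ge (hL : 1 < L) (n : ℕ) :
    (L-1) * Real.log ((n:ℝ)+1) - 2*(L-1)^2 ≤ Real.log (b L n) := by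
  rw [log_b_eq hL]
  have h1 : ∑ k ∈ Finset.range n, ((L-1) * ((k:ℝ)+1)⁻¹ - (L-1)^2 * (((k:ℝ)+1)⁻¹)^2)
      ≤ ∑ k ∈ Finset.range n, Real.log (((k:ℝ)+L)/((k:ℝ)+1)) :=
    Finset.sum_le_sum fun k _ => term_ge hL k
  rw [Finset.sum_sub_distrib, ← Finset.mul_sum, ← Finset.mul_sum, ← H] at h1
  have h2 := harm_ge n
  have h3 := sq_sum_le n
  have hinv : (0:ℝ) ≤ ((n:ℝ)+1)⁻¹ := by positivity
  nlinarith [sq_nonneg (L-1)]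






noncomputable def T (L r : ℝ) (n : ℕ) : ℝ := max (Real.log (b L n * r^(2*n))) 0

lemma T_log {L r : ℝ} (hL : 1 < L) (hr0 : 0 < r) (n : ℕ) :
    Real.log (b L n * r^(2*n)) = Real.log (b L n) + 2*(n:ℝ)*Real.log r := by
  rw [Real.log_mul (b_pos (by linarith) n).ne' (by positivity), Real.log_pow]
  push_cast; ring

lemma midpt {t x : ℝ} (ht : 0 < t) :
    max x 0 ≤ ((max (x+t) 0)^2 - (max (x-t) 0)^2) / (4*t) := by
  rw [le_div_iff₀ (by positivity)]
  rcases le_or_gt x 0 with h | h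
  · rw [max_eq_right h, zero_mul, sub_nonneg]
    have h1 : max (x-t) 0 ≤ max (x+t) 0 := max_le_max (by linarith) le_rfl
    exact pow_le_pow_left₀ (le_max_right _ _) h1 2
  · rw [max_eq_left h.le]
    rcases le_or_gt (x - t) 0 with h2 | h2
    · rw [max_eq_right h2, max_eq_left (by linarith)]
      nlinarith [sq_nonneg (x - t)]
    · rw [max_eq_left h2.le, max_eq_left (by linarith)]
      nlinarith

lemma sum_max_le {t B : ℝ} (ht : 0 < t) (hB : 0 ≤ B) (N : ℕ) :
    ∑ n ∈ Finset.range N, max (B - 2*((n:ℝ)+1)*t) 0 ≤ B^2/(4*t) := by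
  set ψ : ℕ → ℝ := fun n => (max (B - (2*(n:ℝ)+1)*t) 0)^2 / (4*t) with hψ
  have step : ∀ n ∈ Finset.range N, max (B - 2*((n:ℝ)+1)*t) 0 ≤ ψ n - ψ (n+1) := by
    intro n _
    have := midpt (x := B - 2*((n:ℝ)+1)*t) ht
    have e1 : B - 2*((n:ℝ)+1)*t + t = B - (2*(n:ℝ)+1)*t := by ring
    have e2 : B - 2*((n:ℝ)+1)*t - t = B - (2*(↑(n+1):ℝ)+1)*t := by push_cast; ring
    rw [e1, e2] at this
    simpa [hψ, sub_div] using this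
  calc ∑ n ∈ Finset.range N, max (B - 2*((n:ℝ)+1)*t) 0
      ≤ ∑ n ∈ Finset.range N, (ψ n - ψ (n+1)) := Finset.sum_le_sum step
    _ = ψ 0 - ψ N := Finset.sum_range_sub' ψ N
    _ ≤ ψ 0 := by
        have : 0 ≤ ψ N := by positivity
        linarith
    _ ≤ B^2/(4*t) := by
        rw [hψ]
        have h0 : (max (B - (2*((0:ℕ):ℝ)+1)*t) 0)^2 ≤ B^2 := by
          apply pow_le_pow_left₀ (le_max_right _ _)
          apply max_le (by push_cast; linarith) hB
        rw [div_le_div_iff₀ (by positivity) (by positivity)]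
        nlinarith [h0]

lemma sum_log_ge (M : ℕ) :
    (M:ℝ) * Real.log M - M ≤ ∑ n ∈ Finset.range M, Real.log ((n:ℝ)+1) := by
  induction M with
  | zero => simp
  | succ M ih =>
      rw [Finset.sum_range_succ]
      have key : ((M:ℝ)+1) * Real.log ((M:ℝ)+1) - ((M:ℝ)+1)
          ≤ (M:ℝ) * Real.log M - M + Real.log ((M:ℝ)+1) := by
        rcases Nat.eq_zero_or_pos M with rfl | hM
        · simp
        · have hM1 : (1:ℝ) ≤ (M:ℝ) := by exact_mod_cast hM
          have h := Real.log_le_sub_one_of_pos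
            (show (0:ℝ) < ((M:ℝ)+1)/(M:ℝ) by positivity)
          rw [Real.log_div (by positivity) (by positivity)] at h
          have e : ((M:ℝ)+1)/(M:ℝ) - 1 = 1/(M:ℝ) := by field_simp; ring
          rw [e] at h
          have h2 : (M:ℝ) * (Real.log ((M:ℝ)+1) - Real.log M) ≤ 1 := by
            calc (M:ℝ) * (Real.log ((M:ℝ)+1) - Real.log M) ≤ (M:ℝ) * (1/(M:ℝ)) := by
                  apply mul_le_mul_of_nonneg_left h (by linarith)
              _ = 1 := by field_simp
          nlinarith
      push_cast
      linarith [ih]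

lemma sum_id_le (M : ℕ) : ∑ n ∈ Finset.range M, (n:ℝ) ≤ (M:ℝ)^2/2 := by
  induction M with
  | zero => simp
  | succ M ih =>
      rw [Finset.sum_range_succ]
      push_cast
      nlinarith [ih]

section Main
variable {L r : ℝ} (hL : 1 < L) (hr0 : 0 < r) (hr1 : r < 1)

lemma t_pos (hr0 : 0 < r) (hr1 : r < 1) : 0 < -Real.log r :=
  neg_pos.2 (Real.log_neg hr0 hr1)

lemma T_vanish (hL : 1 < L) (hr0 : 0 < r) (hr1 : r < 1) {N : ℕ} (hN : 1 ≤ N)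
    (hA : (L-1) * Real.log N + 2*(L-1) ≤ 2*(N:ℝ)*(-Real.log r))
    (hB : (L-1) ≤ 2*(-Real.log r)*(N:ℝ)) :
    ∀ n, N ≤ n → T L r n = 0 := by
  intro n hn
  obtain ⟨k, rfl⟩ : ∃ k, n = k + 1 := ⟨n - 1, by omega⟩
  have hN1 : (1:ℝ) ≤ (N:ℝ) := by exact_mod_cast hN
  have hnN : (N:ℝ) ≤ (↑(k+1):ℝ) := by exact_mod_cast hn
  have hnpos : (0:ℝ) < (↑(k+1):ℝ) := by positivity
  set t := -Real.log r with hT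
  have ht : 0 < t := t_pos hr0 hr1
  have hm : (0:ℝ) < L - 1 := by linarith
  -- concavity of log
  have hconc : (N:ℝ) * Real.log (↑(k+1):ℝ) ≤ (N:ℝ) * Real.log N + ((↑(k+1):ℝ) - N) := by
    have h := Real.log_le_sub_one_of_pos (show (0:ℝ) < (↑(k+1):ℝ)/(N:ℝ) by positivity)
    rw [Real.log_div (by positivity) (by positivity)] at h
    have h2 : (N:ℝ) * (Real.log (↑(k+1):ℝ) - Real.log N) ≤ (N:ℝ) * ((↑(k+1):ℝ)/(N:ℝ) - 1) :=
      mul_le_mul_of_nonneg_left h (by linarith)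
    have e : (N:ℝ) * ((↑(k+1):ℝ)/(N:ℝ) - 1) = (↑(k+1):ℝ) - N := by field_simp
    nlinarith
  have hc : Real.log (b L (k+1)) ≤ (L-1) * (1 + Real.log ((k:ℝ)+1)) := log_b_le hL k
  have ecast : ((k:ℝ)+1) = (↑(k+1):ℝ) := by push_cast; ring
  rw [ecast] at hc
  have key : Real.log (b L (k+1) * r^(2*(k+1))) ≤ 0 := by
    rw [T_log hL hr0]
    have hlr : Real.log r = -t := by rw [hT]; ring
    rw [hlr]
    -- goal : log b + 2*(k+1)*(-t) ≤ 0
    have h3 : (N:ℝ) * Real.log (b L (k+1)) ≤ (N:ℝ) * ((L-1) * (1 + Real.log (↑(k+1):ℝ))) :=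
      mul_le_mul_of_nonneg_left hc (by linarith)
    nlinarith [mul_le_mul_of_nonneg_left hconc hm.le,
      mul_le_mul_of_nonneg_left hB (sub_nonneg.2 hnN), mul_pos ht hnpos]
  exact max_eq_right key

lemma T_nonneg (n : ℕ) : 0 ≤ T L r n := le_max_right _ _

lemma summable_T (hL : 1 < L) (hr0 : 0 < r) (hr1 : r < 1) : Summable (T L r) := by
  set t := -Real.log r with hT
  have ht : 0 < t := t_pos hr0 hr1
  have hm : (0:ℝ) < L - 1 := by linarith
  have h1 : ∀ᶠ x : ℝ in atTop, ‖Real.log x‖ ≤ (t/(L-1)) * ‖x‖ :=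
    Real.isLittleO_log_id_atTop.bound (by positivity)
  have h2 : ∀ᶠ N : ℕ in atTop, (L-1) * Real.log N + 2*(L-1) ≤ 2*(N:ℝ)*t
      ∧ (L-1) ≤ 2*t*(N:ℝ) ∧ 1 ≤ N := by
    have h3 := tendsto_natCast_atTop_atTop (R := ℝ) |>.eventually h1
    have h4 : ∀ᶠ N : ℕ in atTop, (4*(L-1)/t : ℝ) ≤ (N:ℝ) := by
      have := tendsto_natCast_atTop_atTop (R := ℝ) |>.eventually (eventually_ge_atTop (4*(L-1)/t))
      exact this
    filter_upwards [h3, h4, eventually_ge_atTop 1] with N hN3 hN4 hN1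
    have hN1' : (1:ℝ) ≤ (N:ℝ) := by exact_mod_cast hN1
    have hlogN : 0 ≤ Real.log N := Real.log_nonneg hN1'
    rw [Real.norm_eq_abs, Real.norm_eq_abs, abs_of_nonneg hlogN,
      abs_of_nonneg (by linarith)] at hN3
    have hq : 4*(L-1) ≤ t * (N:ℝ) := by
      rw [div_le_iff₀ ht] at hN4; linarith
    refine ⟨?_, by nlinarith, hN1⟩
    have : (L-1) * Real.log N ≤ (L-1) * ((t/(L-1)) * (N:ℝ)) :=
      mul_le_mul_of_nonneg_left hN3 hm.le
    have e : (L-1) * ((t/(L-1)) * (N:ℝ)) = t * N := by field_simp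
    nlinarith
  obtain ⟨N, hN⟩ := h2.exists
  apply summable_of_ne_finset_zero (s := Finset.range N)
  intro n hn
  exact T_vanish hL hr0 hr1 hN.2.2 hN.1 hN.2.1 n (by simpa using hn)

lemma S_le (hL : 1 < L) (hr0 : 0 < r) (hr1 : r < 1) {N : ℕ} (hN : 1 ≤ N)
    (hA : (L-1) * Real.log N + 2*(L-1) ≤ 2*(N:ℝ)*(-Real.log r))
    (hB : (L-1) ≤ 2*(-Real.log r)*(N:ℝ)) :
    ∑' n, T L r n ≤ ((L-1) * Real.log N + (L-1))^2 / (4*(-Real.log r)) := by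
  set t := -Real.log r with hT
  have ht : 0 < t := t_pos hr0 hr1
  have hm : (0:ℝ) < L - 1 := by linarith
  have hN1 : (1:ℝ) ≤ (N:ℝ) := by exact_mod_cast hN
  set B := (L-1) * Real.log N + (L-1) with hBdef
  have hB0 : 0 ≤ B := by
    have := Real.log_nonneg hN1
    positivity
  have hsum : ∑' n, T L r n = ∑ n ∈ Finset.range (N+1), T L r n := by
    apply tsum_eq_sum
    intro n hn
    exact T_vanish hL hr0 hr1 hN hA hB n (by simp at hn; omega)
  rw [hsum, Finset.sum_range_succ']
  have hT0 : T L r 0 = 0 := by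
    simp [T, b]
  rw [hT0, add_zero]
  have hstep : ∀ k ∈ Finset.range N, T L r (k+1) ≤ max (B - 2*((k:ℝ)+1)*t) 0 := by
    intro k hk
    apply max_le_max _ le_rfl
    rw [T_log hL hr0]
    have hc := log_b_le hL k
    have hkN : (k:ℝ)+1 ≤ (N:ℝ) := by
      have : k + 1 ≤ N := by simpa using Finset.mem_range.1 hk
      exact_mod_cast this
    have hlog : Real.log ((k:ℝ)+1) ≤ Real.log N :=
      Real.log_le_log (by positivity) hkN
    have hlr : Real.log r = -t := by rw [hT]; ring
    rw [hlr]
    push_cast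
    nlinarith
  calc ∑ k ∈ Finset.range N, T L r (k+1)
      ≤ ∑ k ∈ Finset.range N, max (B - 2*((k:ℝ)+1)*t) 0 := Finset.sum_le_sum hstep
    _ ≤ B^2/(4*t) := sum_max_le ht hB0 N

lemma S_ge (hL : 1 < L) (hr0 : 0 < r) (hr1 : r < 1) (M : ℕ) :
    (L-1)*(M:ℝ)*Real.log M - ((L-1) + 2*(L-1)^2)*(M:ℝ) - (-Real.log r)*(M:ℝ)^2
      ≤ ∑' n, T L r n := by
  set t := -Real.log r with hT
  have ht : 0 < t := t_pos hr0 hr1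
  have hm : (0:ℝ) < L - 1 := by linarith
  have h1 : ∑ n ∈ Finset.range M, T L r n ≤ ∑' n, T L r n :=
    Summable.sum_le_tsum _ (fun n _ => T_nonneg n) (summable_T hL hr0 hr1)
  refine le_trans ?_ h1
  have h2 : ∀ n ∈ Finset.range M,
      (L-1) * Real.log ((n:ℝ)+1) - 2*(L-1)^2 - 2*(n:ℝ)*t ≤ T L r n := by
    intro n _
    refine le_trans ?_ (le_max_left _ _)
    rw [T_log hL hr0]
    have := log_b_ge hL n
    have hlr : Real.log r = -t := by rw [hT]; ring
    rw [hlr]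
    nlinarith
  calc (L-1)*(M:ℝ)*Real.log M - ((L-1) + 2*(L-1)^2)*(M:ℝ) - t*(M:ℝ)^2
      ≤ ∑ n ∈ Finset.range M, ((L-1) * Real.log ((n:ℝ)+1) - 2*(L-1)^2 - 2*(n:ℝ)*t) := by
        have hsum_eq : ∑ n ∈ Finset.range M, ((L-1) * Real.log ((n:ℝ)+1) - 2*(L-1)^2 - 2*(n:ℝ)*t)
            = (L-1) * (∑ n ∈ Finset.range M, Real.log ((n:ℝ)+1)) - 2*(L-1)^2*(M:ℝ)
              - 2*t*(∑ n ∈ Finset.range M, (n:ℝ)) := by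
          rw [Finset.sum_sub_distrib, Finset.sum_sub_distrib, ← Finset.mul_sum,
            Finset.sum_const, Finset.card_range, nsmul_eq_mul]
          congr 1
          · congr 1; ring
          · rw [Finset.mul_sum]; apply Finset.sum_congr rfl; intros; ring
        rw [hsum_eq]
        have h3 := sum_log_ge M
        have h4 := sum_id_le M
        have h7 : (L-1) * ((M:ℝ)*Real.log M - M)
            ≤ (L-1) * ∑ n ∈ Finset.range M, Real.log ((n:ℝ)+1) :=
          mul_le_mul_of_nonneg_left h3 hm.le
        nlinarith [mul_le_mul_of_nonneg_left h4 (by positivity : (0:ℝ) ≤ 2*t)]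
    _ ≤ ∑ n ∈ Finset.range M, T L r n := Finset.sum_le_sum h2

end Main


section Limits

noncomputable def ll (r : ℝ) : ℝ := Real.log (1/(1-r))
noncomputable def lam (r : ℝ) : ℝ := -Real.log (-Real.log r)
noncomputable def xfun (L r : ℝ) : ℝ := ((L-1)/(2*(-Real.log r))) * lam r
noncomputable def yfun (L r : ℝ) : ℝ := ((L-1)/(-Real.log r)) * (lam r)^2
noncomputable def Mf (L r : ℝ) : ℕ := ⌊xfun L r⌋₊
noncomputable def Nf (L r : ℝ) : ℕ := ⌊yfun L r⌋₊ + 1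

noncomputable abbrev lfil : Filter ℝ := nhdsWithin 1 (Set.Ioo (0:ℝ) 1)

lemma ev_Ioo : ∀ᶠ r in lfil, r ∈ Set.Ioo (0:ℝ) 1 := eventually_mem_nhdsWithin

lemma ev_t : ∀ᶠ r in lfil, 0 < -Real.log r := by
  filter_upwards [ev_Ioo] with r hr
  exact t_pos hr.1 hr.2

lemma lt1 : Tendsto (fun r : ℝ => -Real.log r) lfil (𝓝[>] 0) := by
  rw [tendsto_nhdsWithin_iff]
  constructor
  · have h : Tendsto Real.log (𝓝 1) (𝓝 0) := by
      simpa using (Real.continuousAt_log one_ne_zero).tendsto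
    simpa using (h.mono_left nhdsWithin_le_nhds).neg
  · exact ev_t

lemma lt1' : Tendsto (fun r : ℝ => -Real.log r) lfil (𝓝 0) :=
  lt1.mono_right nhdsWithin_le_nhds

lemma lt2 : Tendsto (fun r : ℝ => (1-r)/(-Real.log r)) lfil (𝓝 1) := by
  have hd := Real.hasDerivAt_log (x := 1) one_ne_zero
  rw [hasDerivAt_iff_tendsto_slope] at hd
  have hmono : lfil ≤ 𝓝[≠] (1:ℝ) :=
    nhdsWithin_mono 1 (fun x hx => by
      simp only [Set.mem_Ioo] at hx
      simp only [Set.mem_compl_iff, Set.mem_singleton_iff]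
      exact ne_of_lt hx.2)
  have h2 : Tendsto (slope Real.log 1) lfil (𝓝 1) := by
    simpa using hd.mono_left hmono
  have h3 := h2.inv₀ one_ne_zero
  rw [inv_one] at h3
  apply h3.congr'
  filter_upwards [ev_Ioo] with r hr
  have hlog : Real.log r ≠ 0 := (Real.log_neg hr.1 hr.2).ne
  rw [slope_def_field, Real.log_one, sub_zero, inv_div,
    show (1 - r) = -(r-1) by ring, show (-Real.log r) = -(Real.log r) by rfl, neg_div_neg_eq]

lemma lt3 : Tendsto ll lfil atTop := by
  have h1 : Tendsto (fun r : ℝ => 1 - r) lfil (𝓝[>] 0) := by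
    rw [tendsto_nhdsWithin_iff]
    constructor
    · have h0 : Tendsto (fun r : ℝ => 1 - r) (𝓝 1) (𝓝 (1-1)) := tendsto_id.const_sub 1
      rw [sub_self] at h0
      exact h0.mono_left nhdsWithin_le_nhds
    · filter_upwards [ev_Ioo] with r hr
      simpa using hr.2
  have h2 : Tendsto (fun r : ℝ => Real.log (1-r)) lfil atBot :=
    Real.tendsto_log_nhdsGT_zero.comp h1
  have h3 : Tendsto (fun r : ℝ => -Real.log (1-r)) lfil atTop :=
    tendsto_neg_atBot_atTop.comp h2
  apply h3.congr
  intro r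
  rw [ll, one_div, Real.log_inv]

lemma lt4 : Tendsto lam lfil atTop := by
  have h2 : Tendsto (fun r : ℝ => Real.log (-Real.log r)) lfil atBot :=
    Real.tendsto_log_nhdsGT_zero.comp lt1
  exact tendsto_neg_atBot_atTop.comp h2

lemma ev_lam : ∀ᶠ r in lfil, 2 ≤ lam r := lt4.eventually_ge_atTop 2
lemma ev_ll : ∀ᶠ r in lfil, 1 ≤ ll r := lt3.eventually_ge_atTop 1

lemma lt_lamll : Tendsto (fun r => lam r - ll r) lfil (𝓝 0) := by
  have hc : Tendsto (fun r : ℝ => Real.log ((1-r)/(-Real.log r))) lfil (𝓝 0) := by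
    have h := (Real.continuousAt_log one_ne_zero).tendsto.comp lt2
    rw [Real.log_one] at h; exact h
  apply hc.congr'
  filter_upwards [ev_Ioo] with r hr
  have ht : 0 < -Real.log r := t_pos hr.1 hr.2
  have h1r : (0:ℝ) < 1 - r := by simp [Set.mem_Ioo] at hr; linarith [hr.2]
  rw [Real.log_div h1r.ne' ht.ne', lam, ll, one_div, Real.log_inv]
  ring

lemma lt5 : Tendsto (fun r => lam r / ll r) lfil (𝓝 1) := by
  have h := (lt_lamll.mul lt3.inv_tendsto_atTop).add (tendsto_const_nhds (x := (1:ℝ)))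
  rw [zero_mul, zero_add] at h
  apply h.congr'
  filter_upwards [ev_ll] with r hll
  have : ll r ≠ 0 := by linarith
  rw [Pi.inv_apply, sub_mul, mul_inv_cancel₀ this]; ring

lemma hx {L : ℝ} (hL : 1 < L) : Tendsto (xfun L) lfil atTop := by
  have h1 : Tendsto (fun r : ℝ => (-Real.log r)⁻¹ * lam r) lfil atTop :=
    (tendsto_inv_nhdsGT_zero.comp lt1).atTop_mul_atTop₀ lt4
  have h2 := h1.const_mul_atTop (show (0:ℝ) < (L-1)/2 by linarith)
  apply h2.congr
  intro r
  rw [xfun]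
  ring

lemma hy {L : ℝ} (hL : 1 < L) : Tendsto (yfun L) lfil atTop := by
  have h1 : Tendsto (fun r : ℝ => (-Real.log r)⁻¹ * (lam r)^2) lfil atTop := by
    apply (tendsto_inv_nhdsGT_zero.comp lt1).atTop_mul_atTop₀
    have := lt4.atTop_mul_atTop₀ lt4
    apply this.congr
    intro r; rw [sq]
  have h2 := h1.const_mul_atTop (show (0:ℝ) < (L-1) by linarith)
  apply h2.congr
  intro r
  rw [yfun]
  ring

lemma loglam : Tendsto (fun r => Real.log (lam r) / lam r) lfil (𝓝 0) := by
  have h := Real.isLittleO_log_id_atTop.tendsto_div_nhds_zero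
  exact h.comp lt4

lemma lt6 {L : ℝ} (hL : 1 < L) :
    Tendsto (fun r => (-Real.log r) * (Mf L r) / lam r) lfil (𝓝 ((L-1)/2)) := by
  have hm : (0:ℝ) < L - 1 := by linarith
  have hlo : Tendsto (fun r : ℝ => (L-1)/2 - (-Real.log r) * (lam r)⁻¹) lfil (𝓝 ((L-1)/2)) := by
    have := tendsto_const_nhds (x := ((L-1)/2 : ℝ)) (f := lfil) |>.sub
      (lt1'.mul lt4.inv_tendsto_atTop)
    simpa using this
  apply tendsto_of_tendsto_of_tendsto_of_le_of_le' hlo tendsto_const_nhds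
  · filter_upwards [ev_t, ev_lam, (hx hL).eventually_ge_atTop 2] with r ht hlam hx2
    have hlam0 : (0:ℝ) < lam r := by linarith
    have hM : xfun L r - 1 ≤ (Mf L r : ℝ) := by
      have := Nat.lt_floor_add_one (xfun L r)
      rw [Mf]; push_cast; linarith
    have hlr : Real.log r ≠ 0 := by intro h; rw [h] at ht; norm_num at ht
    have e : (L-1)/2 - (-Real.log r) * (lam r)⁻¹ = (-Real.log r) * (xfun L r - 1) / lam r := by
      rw [xfun]; field_simp [hlr]; ring
    rw [e]
    gcongr
  · filter_upwards [ev_t, ev_lam, (hx hL).eventually_ge_atTop 2] with r ht hlam hx2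
    have hlam0 : (0:ℝ) < lam r := by linarith
    have hM : (Mf L r : ℝ) ≤ xfun L r := Nat.floor_le (by linarith)
    have hlr : Real.log r ≠ 0 := by intro h; rw [h] at ht; norm_num at ht
    have e : (L-1)/2 = (-Real.log r) * (xfun L r) / lam r := by
      rw [xfun]; field_simp [hlr]
    rw [e]
    gcongr

lemma hlogx {L : ℝ} (hL : 1 < L) :
    Tendsto (fun r => Real.log (xfun L r) / lam r) lfil (𝓝 1) := by
  have hm : (0:ℝ) < L - 1 := by linarith
  have hG : Tendsto (fun r => (Real.log ((L-1)/2)) * (lam r)⁻¹ + 1 + Real.log (lam r) / lam r)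
      lfil (𝓝 1) := by
    have h1 := (tendsto_const_nhds (x := Real.log ((L-1)/2)) (f := lfil)).mul lt4.inv_tendsto_atTop
    have h2 := (h1.add (tendsto_const_nhds (x := (1:ℝ)))).add loglam
    simpa using h2
  apply hG.congr'
  filter_upwards [ev_t, ev_lam] with r ht hlam
  have hlam0 : (0:ℝ) < lam r := by linarith
  have hx0 : xfun L r = ((L-1)/2) * ((-Real.log r)⁻¹ * lam r) := by rw [xfun]; ring
  have hlog1 : Real.log (xfun L r)
      = Real.log ((L-1)/2) + (lam r + Real.log (lam r)) := by
    rw [hx0, Real.log_mul (by positivity) (by positivity),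
      Real.log_mul (by positivity) hlam0.ne', Real.log_inv, lam]
  rw [hlog1]
  field_simp
  ring

lemma lt7 {L : ℝ} (hL : 1 < L) :
    Tendsto (fun r => Real.log (Mf L r) / lam r) lfil (𝓝 1) := by
  have hup := hlogx hL
  have hlo : Tendsto (fun r => Real.log (xfun L r) / lam r - Real.log 2 * (lam r)⁻¹)
      lfil (𝓝 1) := by
    have := hup.sub ((tendsto_const_nhds (x := Real.log 2) (f := lfil)).mul lt4.inv_tendsto_atTop)
    simpa using this
  apply tendsto_of_tendsto_of_tendsto_of_le_of_le' hlo hup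
  · filter_upwards [ev_t, ev_lam, (hx hL).eventually_ge_atTop 2] with r ht hlam hx2
    have hlam0 : (0:ℝ) < lam r := by linarith
    have hM : xfun L r / 2 ≤ (Mf L r : ℝ) := by
      have := Nat.lt_floor_add_one (xfun L r)
      rw [Mf]; push_cast; linarith
    have hlog : Real.log (xfun L r) - Real.log 2 ≤ Real.log (Mf L r) := by
      rw [← Real.log_div (by linarith) (by norm_num)]
      exact Real.log_le_log (by linarith) hM
    rw [show Real.log (xfun L r) / lam r - Real.log 2 * (lam r)⁻¹
        = (Real.log (xfun L r) - Real.log 2) / lam r by field_simp]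
    gcongr
  · filter_upwards [ev_t, ev_lam, (hx hL).eventually_ge_atTop 2] with r ht hlam hx2
    have hlam0 : (0:ℝ) < lam r := by linarith
    have hM : (Mf L r : ℝ) ≤ xfun L r := Nat.floor_le (by linarith)
    have hM1 : (1:ℝ) ≤ (Mf L r : ℝ) := by
      have := Nat.lt_floor_add_one (xfun L r)
      rw [Mf]; push_cast; linarith
    have hlog : Real.log (Mf L r) ≤ Real.log (xfun L r) :=
      Real.log_le_log (by linarith) hM
    gcongr

lemma hlogy {L : ℝ} (hL : 1 < L) :
    Tendsto (fun r => Real.log (yfun L r) / lam r) lfil (𝓝 1) := by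
  have hm : (0:ℝ) < L - 1 := by linarith
  have hG : Tendsto (fun r => (Real.log (L-1)) * (lam r)⁻¹ + 1 + 2 * (Real.log (lam r) / lam r))
      lfil (𝓝 1) := by
    have h1 := (tendsto_const_nhds (x := Real.log (L-1)) (f := lfil)).mul lt4.inv_tendsto_atTop
    have h2 := (h1.add (tendsto_const_nhds (x := (1:ℝ)))).add
      ((tendsto_const_nhds (x := (2:ℝ)) (f := lfil)).mul loglam)
    simpa using h2
  apply hG.congr'
  filter_upwards [ev_t, ev_lam] with r ht hlam
  have hlam0 : (0:ℝ) < lam r := by linarith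
  have hy0 : yfun L r = (L-1) * ((-Real.log r)⁻¹ * (lam r)^2) := by rw [yfun]; ring
  have hlog1 : Real.log (yfun L r)
      = Real.log (L-1) + (lam r + 2 * Real.log (lam r)) := by
    rw [hy0, Real.log_mul (by positivity) (by positivity),
      Real.log_mul (by positivity) (by positivity), Real.log_inv, Real.log_pow, lam]
    push_cast
    ring
  rw [hlog1]
  field_simp
  ring

lemma lt8 {L : ℝ} (hL : 1 < L) :
    Tendsto (fun r => Real.log (Nf L r) / lam r) lfil (𝓝 1) := by
  have hlo := hlogy hL
  have hup : Tendsto (fun r => Real.log (yfun L r) / lam r + Real.log 2 * (lam r)⁻¹)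
      lfil (𝓝 1) := by
    have := hlo.add ((tendsto_const_nhds (x := Real.log 2) (f := lfil)).mul lt4.inv_tendsto_atTop)
    simpa using this
  apply tendsto_of_tendsto_of_tendsto_of_le_of_le' hlo hup
  · filter_upwards [ev_t, ev_lam, (hy hL).eventually_ge_atTop 2] with r ht hlam hy2
    have hlam0 : (0:ℝ) < lam r := by linarith
    have hN : yfun L r ≤ (Nf L r : ℝ) := by
      have := Nat.lt_floor_add_one (yfun L r)
      rw [Nf]; push_cast; linarith
    have hlog : Real.log (yfun L r) ≤ Real.log (Nf L r) :=
      Real.log_le_log (by linarith) hN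
    gcongr
  · filter_upwards [ev_t, ev_lam, (hy hL).eventually_ge_atTop 2] with r ht hlam hy2
    have hlam0 : (0:ℝ) < lam r := by linarith
    have hN : (Nf L r : ℝ) ≤ 2 * yfun L r := by
      have h1 : (⌊yfun L r⌋₊ : ℝ) ≤ yfun L r := Nat.floor_le (by linarith)
      rw [Nf]; push_cast; linarith
    have hlog : Real.log (Nf L r) ≤ Real.log (yfun L r) + Real.log 2 := by
      rw [← Real.log_mul (ne_of_gt (by linarith : (0:ℝ) < yfun L r)) (by norm_num : (2:ℝ) ≠ 0)]
      have hN1 : (0:ℝ) < (Nf L r : ℝ) := by rw [Nf]; push_cast; positivity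
      exact Real.log_le_log hN1 (by linarith)
    rw [show Real.log (yfun L r) / lam r + Real.log 2 * (lam r)⁻¹
        = (Real.log (yfun L r) + Real.log 2) / lam r by field_simp]
    gcongr

end Limits
section Final
variable {L : ℝ}

lemma ev_logN (hL : 1 < L) : ∀ᶠ r in lfil, Real.log (Nf L r) ≤ (3/2) * lam r := by
  have h := (lt8 hL).eventually_lt_const (show (1:ℝ) < 3/2 by norm_num)
  filter_upwards [h, ev_lam] with r hr hlam
  have hlam0 : (0:ℝ) < lam r := by linarith
  rw [div_lt_iff₀ hlam0] at hr
  linarith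

lemma ev_tN (hL : 1 < L) : ∀ᶠ r in lfil,
    (L-1) * (lam r)^2 ≤ (-Real.log r) * (Nf L r : ℝ) := by
  filter_upwards [ev_t] with r ht
  have hlr : Real.log r ≠ 0 := by intro h; rw [h] at ht; norm_num at ht
  have hN : yfun L r ≤ (Nf L r : ℝ) := by
    have := Nat.lt_floor_add_one (yfun L r)
    rw [Nf]; push_cast; linarith
  have e : (-Real.log r) * yfun L r = (L-1)*(lam r)^2 := by
    rw [yfun]; field_simp
  nlinarith [mul_le_mul_of_nonneg_left hN ht.le]

lemma ev_hA (hL : 1 < L) : ∀ᶠ r in lfil,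
    (L-1) * Real.log (Nf L r) + 2*(L-1) ≤ 2*(Nf L r : ℝ)*(-Real.log r) := by
  filter_upwards [ev_logN hL, ev_tN hL, ev_lam] with r h1 h2 hlam
  have hm : (0:ℝ) < L-1 := by linarith
  have h3 : (L-1) * Real.log (Nf L r) ≤ (L-1)*((3/2)*lam r) :=
    mul_le_mul_of_nonneg_left h1 hm.le
  nlinarith [mul_le_mul_of_nonneg_left hlam hm.le,
    mul_le_mul_of_nonneg_left hlam (mul_nonneg hm.le (by linarith : (0:ℝ) ≤ lam r))]

lemma ev_hB (hL : 1 < L) : ∀ᶠ r in lfil,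
    (L-1) ≤ 2*(-Real.log r)*(Nf L r : ℝ) := by
  filter_upwards [ev_tN hL, ev_lam, ev_t] with r h2 hlam ht
  have hm : (0:ℝ) < L-1 := by linarith
  nlinarith [mul_le_mul_of_nonneg_left hlam hm.le]

noncomputable def loF (L : ℝ) (r : ℝ) : ℝ :=
  ((L-1)*(Mf L r : ℝ)*Real.log (Mf L r) - ((L-1) + 2*(L-1)^2)*(Mf L r : ℝ)
    - (-Real.log r)*(Mf L r : ℝ)^2) * (1-r) / (ll r)^2

noncomputable def hiF (L : ℝ) (r : ℝ) : ℝ :=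
  ((L-1) * Real.log (Nf L r) + (L-1))^2 / (4*(-Real.log r)) * (1-r) / (ll r)^2

lemma loT (hL : 1 < L) : Tendsto (loF L) lfil (𝓝 ((L-1)^2/4)) := by
  have hm : (0:ℝ) < L-1 := by linarith
  have hG : Tendsto (fun r => ((1-r)/(-Real.log r)) *
      ((L-1) * ((-Real.log r)*(Mf L r : ℝ)/lam r) * (Real.log (Mf L r)/lam r)
        - ((L-1)+2*(L-1)^2) * ((-Real.log r)*(Mf L r : ℝ)/lam r) * (lam r)⁻¹
        - ((-Real.log r)*(Mf L r : ℝ)/lam r)^2) * (lam r / ll r)^2) lfil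
      (𝓝 (1 * ((L-1)*((L-1)/2)*1 - ((L-1)+2*(L-1)^2)*((L-1)/2)*0 - ((L-1)/2)^2) * 1^2)) := by
    apply Tendsto.mul
    · apply Tendsto.mul lt2
      apply Tendsto.sub
      · apply Tendsto.sub
        · exact (tendsto_const_nhds.mul (lt6 hL)).mul (lt7 hL)
        · exact (tendsto_const_nhds.mul (lt6 hL)).mul lt4.inv_tendsto_atTop
      · exact (lt6 hL).pow 2
    · exact lt5.pow 2
  rw [show (1 * ((L-1)*((L-1)/2)*1 - ((L-1)+2*(L-1)^2)*((L-1)/2)*0 - ((L-1)/2)^2) * 1^2 : ℝ)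
      = (L-1)^2/4 by ring] at hG
  apply hG.congr'
  filter_upwards [ev_t, ev_lam, ev_ll] with r ht hlam hll
  have hlr : Real.log r ≠ 0 := by intro h; rw [h] at ht; norm_num at ht
  have hlam0 : lam r ≠ 0 := by intro h; rw [h] at hlam; norm_num at hlam
  have hll0 : ll r ≠ 0 := by intro h; rw [h] at hll; norm_num at hll
  rw [loF]
  field_simp
  ring

lemma hiT (hL : 1 < L) : Tendsto (hiF L) lfil (𝓝 ((L-1)^2/4)) := by
  have hm : (0:ℝ) < L-1 := by linarith
  have hG : Tendsto (fun r => ((L-1)^2/4) *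
      ((Real.log (Nf L r)/lam r)*(lam r/ll r) + (ll r)⁻¹)^2 * ((1-r)/(-Real.log r))) lfil
      (𝓝 (((L-1)^2/4) * (1*1 + 0)^2 * 1)) := by
    apply Tendsto.mul
    · apply Tendsto.mul tendsto_const_nhds
      exact (((lt8 hL).mul lt5).add lt3.inv_tendsto_atTop).pow 2
    · exact lt2
  rw [show (((L-1)^2/4) * (1*1 + 0)^2 * 1 : ℝ) = (L-1)^2/4 by ring] at hG
  apply hG.congr'
  filter_upwards [ev_t, ev_lam, ev_ll] with r ht hlam hll
  have hlr : Real.log r ≠ 0 := by intro h; rw [h] at ht; norm_num at ht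
  have hlam0 : lam r ≠ 0 := by intro h; rw [h] at hlam; norm_num at hlam
  have hll0 : ll r ≠ 0 := by intro h; rw [h] at hll; norm_num at hll
  rw [hiF]
  field_simp

lemma ev_lo (hL : 1 < L) : ∀ᶠ r in lfil,
    loF L r ≤ (∑' n, T L r n) * (1-r) / (ll r)^2 := by
  filter_upwards [ev_Ioo, ev_ll] with r hr hll
  have hS := S_ge hL hr.1 hr.2 (Mf L r)
  have h1r : (0:ℝ) ≤ 1 - r := by linarith [hr.2]
  have hll2 : (0:ℝ) < (ll r)^2 := by nlinarith
  rw [loF]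
  have h2 := mul_le_mul_of_nonneg_right hS h1r
  exact div_le_div_of_nonneg_right h2 hll2.le

lemma ev_hi (hL : 1 < L) : ∀ᶠ r in lfil,
    (∑' n, T L r n) * (1-r) / (ll r)^2 ≤ hiF L r := by
  filter_upwards [ev_Ioo, ev_ll, ev_hA hL, ev_hB hL] with r hr hll hA hB
  have hN1 : 1 ≤ Nf L r := by rw [Nf]; omega
  have hS := S_le hL hr.1 hr.2 hN1 hA hB
  have h1r : (0:ℝ) ≤ 1 - r := by linarith [hr.2]
  have hll2 : (0:ℝ) < (ll r)^2 := by nlinarith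
  rw [hiF]
  have h2 := mul_le_mul_of_nonneg_right hS h1r
  exact div_le_div_of_nonneg_right h2 hll2.le

end Final
end HP

open Real Filter Topology

theorem hole_prob_stmt_15 (L : ℝ) (hL : 1 < L) :
    Tendsto (fun r : ℝ =>
        (∑' n : ℕ, max (Real.log
            (Real.Gamma (n + L) / (Real.Gamma L * Real.Gamma (n + 1)) * r ^ (2 * n))) 0)
          * (1 - r) / (Real.log (1 / (1 - r))) ^ 2)
      (nhdsWithin 1 (Set.Ioo (0 : ℝ) 1)) (𝓝 ((L - 1) ^ 2 / 4)) := by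
  have hfun : (fun r : ℝ =>
        (∑' n : ℕ, max (Real.log
            (Real.Gamma (n + L) / (Real.Gamma L * Real.Gamma (n + 1)) * r ^ (2 * n))) 0)
          * (1 - r) / (Real.log (1 / (1 - r))) ^ 2)
      = fun r : ℝ => (∑' n, HP.T L r n) * (1-r) / (HP.ll r)^2 := by
    funext r
    rw [HP.ll]
    congr 2
    exact tsum_congr fun n => by rw [HP.T, HP.gamma_eq (by linarith) n]
  rw [hfun]
  exact tendsto_of_tendsto_of_tendsto_of_le_of_le' (HP.loT hL) (HP.hiT hL)
    (HP.ev_lo hL) (HP.ev_hi hL)
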